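/- Let (V_0,…,V_{n−1}) be an n-gon with n ≥ 4 that is strictly convex. Then the 3(n−3)+2 signs a_2,…,a_{n−2}, b_2,…,b_{n−1}, c_2,…,c_{n−1} are all equal and nonzero, where a_i = sign Δ(V_{i−1},V_i,V_{i+1}), b_i = sign Δ(V_0,V_{i−1},V_i), c_i = sign Δ(V_0,V_1,V_i). -/

import Mathlib

/-- Determinant of the 3×3 matrix with rows (1,x_P,y_P), (1,x_Q,y_Q), (1,x_R,y_R). -/
def det3 (P Q R : ℝ × ℝ) : ℝ :=
  Matrix.det !![1, P.1, P.2; 1, Q.1, Q.2; 1, R.1, R.2]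

/-- Dot product on ℝ². -/
def dot2 (a b : ℝ × ℝ) : ℝ := a.1 * b.1 + a.2 * b.2

/-- The points of `S` lie strictly to one side of the segment `[P,Q]`:
there is a line through `P` and `Q` (with normal `nv`) such that all of `S`
lies in one of the open half-planes it bounds. -/
def StrictSide (P Q : ℝ × ℝ) (S : Set (ℝ × ℝ)) : Prop :=
  ∃ nv : ℝ × ℝ, nv ≠ 0 ∧ dot2 nv (Q - P) = 0 ∧ ∀ A ∈ S, 0 < dot2 nv (A - P)

/-- The points of `S` lie (non-strictly) to one side of the segment `[P,Q]`:
there is a line containing `[P,Q]` bounding a closed half-plane containing `S`. -/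
def WeakSide (P Q : ℝ × ℝ) (S : Set (ℝ × ℝ)) : Prop :=
  ∃ nv : ℝ × ℝ, nv ≠ 0 ∧ dot2 nv (Q - P) = 0 ∧ ∀ A ∈ S, 0 ≤ dot2 nv (A - P)

/-- The successor index modulo `n`. -/
def nxt {n : ℕ} (i : Fin n) : Fin n :=
  ⟨(i.val + 1) % n, Nat.mod_lt _ (Nat.zero_lt_of_lt i.isLt)⟩

/-- The polygon `(V 0, …, V (n-1))` is convex: the union of its edges equals
the boundary of the convex hull of its vertex set. -/
def IsConvexPolygon {n : ℕ} (V : Fin n → ℝ × ℝ) : Prop :=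
  (⋃ i : Fin n, segment ℝ (V i) (V (nxt i))) = frontier (convexHull ℝ (Set.range V))

/-- Quasi-strict: no two adjacent vertices are collinear with any other vertex. -/
def QuasiStrict {n : ℕ} (V : Fin n → ℝ × ℝ) : Prop :=
  ∀ i j : Fin n, j ≠ i → j ≠ nxt i → ¬ Collinear ℝ ({V i, V (nxt i), V j} : Set (ℝ × ℝ))

/-- Strict: no three vertices with distinct indices are collinear. -/
def StrictPoly {n : ℕ} (V : Fin n → ℝ × ℝ) : Prop :=
  ∀ i j k : Fin n, i ≠ j → i ≠ k → j ≠ k → ¬ Collinear ℝ ({V i, V j, V k} : Set (ℝ × ℝ))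

/-- The vertices other than the endpoints of edge `i`. -/
def OtherVerts {n : ℕ} (V : Fin n → ℝ × ℝ) (i : Fin n) : Set (ℝ × ℝ) :=
  {P | ∃ j : Fin n, j ≠ i ∧ j ≠ nxt i ∧ P = V j}

/-- The polygon is strictly to one side of each of its edges. -/
def StrictlyToOneSide {n : ℕ} (V : Fin n → ℝ × ℝ) : Prop :=
  ∀ i : Fin n, StrictSide (V i) (V (nxt i)) (OtherVerts V i)

/-- The polygon is (non-strictly) to one side of each of its edges. -/
def ToOneSide {n : ℕ} (V : Fin n → ℝ × ℝ) : Prop :=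
  ∀ i : Fin n, WeakSide (V i) (V (nxt i)) (OtherVerts V i)

lemma det3_eq (P Q R : ℝ × ℝ) :
    det3 P Q R = (Q.1 - P.1) * (R.2 - P.2) - (Q.2 - P.2) * (R.1 - P.1) := by
  simp [det3, Matrix.det_fin_three, Matrix.vecHead, Matrix.vecTail]
  ring

lemma det3_cyc (P Q R : ℝ × ℝ) : det3 P Q R = det3 Q R P := by
  simp only [det3_eq]; ring

lemma collinear_of_level (p q : ℝ) (h : ¬(p = 0 ∧ q = 0)) (a b c : ℝ × ℝ)
    (hb : p * b.1 + q * b.2 = p * a.1 + q * a.2)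
    (hc : p * c.1 + q * c.2 = p * a.1 + q * a.2) :
    Collinear ℝ ({a, b, c} : Set (ℝ × ℝ)) := by
  have key : ∀ x : ℝ × ℝ, p * x.1 + q * x.2 = p * a.1 + q * a.2 →
      ∃ r : ℝ, x = r • ((-q, p) : ℝ × ℝ) +ᵥ a := by
    intro x hx
    by_cases hp : p = 0
    · have hq : q ≠ 0 := fun hq => h ⟨hp, hq⟩
      refine ⟨(x.1 - a.1) / (-q), ?_⟩
      have hx2 : x.2 = a.2 := by
        subst hp
        have h0 : q * (x.2 - a.2) = 0 := by linarith
        rcases mul_eq_zero.1 h0 with h' | h'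
        · exact absurd h' hq
        · linarith
      have : x = (x.1, x.2) := rfl
      rw [this, hx2]
      simp [Prod.ext_iff, vadd_eq_add, Prod.smul_def, hp]
      field_simp
      ring
    · refine ⟨(x.2 - a.2) / p, ?_⟩
      have hx1 : x.1 = a.1 - q * (x.2 - a.2) / p := by field_simp; linarith
      have : x = (x.1, x.2) := rfl
      rw [this, hx1]
      simp [Prod.ext_iff, vadd_eq_add, Prod.smul_def]
      constructor
      · field_simp; ring
      · field_simp; ring
  rw [collinear_iff_of_mem (Set.mem_insert a _)]
  refine ⟨((-q, p) : ℝ × ℝ), ?_⟩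
  rintro x (rfl | rfl | rfl)
  · exact key _ rfl
  · exact key _ hb
  · exact key _ hc

lemma edge_sign {P Q : ℝ × ℝ} {S : Set (ℝ × ℝ)} (hPQ : P ≠ Q) (h : StrictSide P Q S) :
    ∃ ε : ℝ, ε ≠ 0 ∧ ∀ A ∈ S, Real.sign (det3 P Q A) = ε := by
  obtain ⟨nv, hnv, hperp, hpos⟩ := h
  have hnv' : ¬(nv.1 = 0 ∧ nv.2 = 0) := by
    rintro ⟨h1, h2⟩; exact hnv (Prod.ext h1 h2)
  have hd : ¬((Q - P).1 = 0 ∧ (Q - P).2 = 0) := by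
    rintro ⟨h1, h2⟩
    apply hPQ
    have : Q - P = 0 := Prod.ext h1 h2
    have := sub_eq_zero.1 this
    exact this.symm
  have hperp' : nv.1 * (Q - P).1 + nv.2 * (Q - P).2 = 0 := hperp
  obtain ⟨l, hl0, h1, h2⟩ : ∃ l : ℝ, l ≠ 0 ∧ nv.1 = -l * (Q - P).2 ∧ nv.2 = l * (Q - P).1 := by
    by_cases hd1 : (Q - P).1 = 0
    · have hd2 : (Q - P).2 ≠ 0 := fun h2 => hd ⟨hd1, h2⟩
      have hnv2 : nv.2 = 0 := by
        have h0 : nv.2 * (Q - P).2 = 0 := by rw [hd1] at hperp'; linarith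
        rcases mul_eq_zero.1 h0 with h' | h'
        · exact h'
        · exact absurd h' hd2
      have hnv1 : nv.1 ≠ 0 := fun h' => hnv' ⟨h', hnv2⟩
      refine ⟨-nv.1 / (Q - P).2, div_ne_zero (neg_ne_zero.2 hnv1) hd2, ?_, ?_⟩
      · rw [neg_div, neg_neg, div_mul_cancel₀ _ hd2]
      · rw [hnv2, hd1]; ring
    · refine ⟨nv.2 / (Q - P).1, ?_, ?_, ?_⟩
      · intro h'
        have hnv2 : nv.2 = 0 := by
          rcases div_eq_zero_iff.1 h' with h'' | h''
          · exact h''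
          · exact absurd h'' hd1
        have hnv1 : nv.1 = 0 := by
          have h0 : nv.1 * (Q - P).1 = 0 := by rw [hnv2] at hperp'; linarith
          rcases mul_eq_zero.1 h0 with h'' | h''
          · exact h''
          · exact absurd h'' hd1
        exact hnv' ⟨hnv1, hnv2⟩
      · rw [neg_mul, div_mul_eq_mul_div, ← neg_div, eq_div_iff hd1]; linarith
      · rw [div_mul_cancel₀ _ hd1]
  have key : ∀ A : ℝ × ℝ, dot2 nv (A - P) = l * det3 P Q A := by
    intro A
    rw [det3_eq]
    simp only [dot2, Prod.fst_sub, Prod.snd_sub] at h1 h2 ⊢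
    rw [h1, h2]; ring
  refine ⟨if 0 < l then 1 else -1, by split <;> norm_num, ?_⟩
  intro A hA
  have hpA := hpos A hA
  rw [key A] at hpA
  rcases lt_or_gt_of_ne hl0 with hl | hl
  · have hneg : det3 P Q A < 0 := by nlinarith
    rw [Real.sign_of_neg hneg, if_neg (not_lt.2 hl.le)]
  · have hposd : 0 < det3 P Q A := by nlinarith
    rw [Real.sign_of_pos hposd, if_pos hl]

lemma nxt_ne {n : ℕ} (hn : 2 ≤ n) (i : Fin n) : nxt i ≠ i := by
  have hni := i.isLt
  intro hEq
  have hv : (i.val + 1) % n = i.val := congrArg Fin.val hEq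
  rcases Nat.lt_or_ge (i.val + 1) n with h | h
  · rw [Nat.mod_eq_of_lt h] at hv; omega
  · have h' : i.val + 1 = n := by omega
    rw [h', Nat.mod_self] at hv; omega

lemma span_top {n : ℕ} (hn : 4 ≤ n) (V : Fin n → ℝ × ℝ) (hs : StrictPoly V) :
    affineSpan ℝ (Set.range V) = ⊤ := by
  by_contra htop
  have hne : (Set.range V).Nonempty := ⟨V ⟨0, by omega⟩, Set.mem_range_self _⟩
  rw [AffineSubspace.affineSpan_eq_top_iff_vectorSpan_eq_top_of_nonempty ℝ (ℝ × ℝ) (ℝ × ℝ) hne] at htop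
  have hfr : Module.finrank ℝ (vectorSpan ℝ (Set.range V)) < Module.finrank ℝ (ℝ × ℝ) :=
    Submodule.finrank_lt htop
  have h2 : Module.finrank ℝ (ℝ × ℝ) = 2 := by
    rw [Module.finrank_prod, Module.finrank_self]
  have hcol : Collinear ℝ (Set.range V) := by
    rw [collinear_iff_finrank_le_one]
    omega
  have h012 : Collinear ℝ ({V ⟨0, by omega⟩, V ⟨1, by omega⟩, V ⟨2, by omega⟩} : Set (ℝ × ℝ)) :=
    hcol.subset (by rintro x (rfl | rfl | rfl) <;> exact Set.mem_range_self _)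
  exact hs ⟨0, by omega⟩ ⟨1, by omega⟩ ⟨2, by omega⟩ (Fin.ne_of_val_ne (by norm_num))
    (Fin.ne_of_val_ne (by norm_num)) (Fin.ne_of_val_ne (by norm_num)) h012

lemma strict_sides {n : ℕ} (hn : 4 ≤ n) (V : Fin n → ℝ × ℝ)
    (hs : StrictPoly V) (hc : IsConvexPolygon V) : StrictlyToOneSide V := by
  intro i
  unfold IsConvexPolygon at hc
  set K := convexHull ℝ (Set.range V) with hKdef
  have hK : Convex ℝ K := convex_convexHull ℝ _
  have hspan : affineSpan ℝ K = ⊤ := by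
    rw [hKdef, affineSpan_convexHull]; exact span_top hn V hs
  have hint : (interior K).Nonempty := hK.interior_nonempty_iff_affineSpan_eq_top.2 hspan
  set P := V i with hP
  set Q := V (nxt i) with hQ
  set m : ℝ × ℝ := (1/2 : ℝ) • P + (1/2 : ℝ) • Q with hm
  have hmseg : m ∈ segment ℝ P Q := ⟨1/2, 1/2, by norm_num, by norm_num, by norm_num, rfl⟩
  have hmfr : m ∈ frontier K := by
    rw [← hc]
    exact Set.mem_iUnion.2 ⟨i, hmseg⟩
  have hmint : m ∉ interior K := fun hmem => hmfr.2 hmem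
  obtain ⟨f, hf⟩ := geometric_hahn_banach_open_point hK.interior isOpen_interior hmint
  obtain ⟨x0, hx0⟩ := hint
  have hfx0 : f x0 < f m := hf x0 hx0
  have hKle : ∀ a ∈ K, f a ≤ f m := by
    intro a ha
    by_contra hlt
    push_neg at hlt
    set t : ℝ := (f a - f m) / (f a - f x0) with ht
    have hd : 0 < f a - f x0 := by linarith
    have hdne : f a - f x0 ≠ 0 := ne_of_gt hd
    have ht0 : 0 < t := div_pos (by linarith) hd
    have ht1 : t < 1 := (div_lt_one hd).2 (by linarith)
    have hp' : t • x0 + (1 - t) • a ∈ interior K :=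
      hK.combo_interior_closure_mem_interior hx0 (subset_closure ha) ht0 (by linarith) (by ring)
    have hcomb := hf _ hp'
    rw [map_add, map_smul, map_smul, smul_eq_mul, smul_eq_mul] at hcomb
    have hteq : t * f x0 - t * f a = -(f a - f m) := by
      rw [ht]; field_simp; ring
    linarith
  have hPK : P ∈ K := subset_convexHull ℝ _ ⟨i, rfl⟩
  have hQK : Q ∈ K := subset_convexHull ℝ _ ⟨nxt i, rfl⟩
  have hfm : f m = (1/2) * f P + (1/2) * f Q := by
    rw [hm, map_add, map_smul, map_smul, smul_eq_mul, smul_eq_mul]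
  have hfP : f P = f m := by linarith [hKle P hPK, hKle Q hQK]
  have hfQ : f Q = f m := by linarith [hKle P hPK, hKle Q hQK]
  set p := f (1, 0) with hp
  set q := f (0, 1) with hq
  have hrep : ∀ x : ℝ × ℝ, f x = p * x.1 + q * x.2 := by
    intro x
    have hx : x = x.1 • ((1 : ℝ), (0 : ℝ)) + x.2 • ((0 : ℝ), (1 : ℝ)) := by
      ext <;> simp
    conv_lhs => rw [hx]
    rw [map_add, map_smul, map_smul, smul_eq_mul, smul_eq_mul]; ring
  have hpq : ¬(p = 0 ∧ q = 0) := by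
    rintro ⟨hp0, hq0⟩
    have h1 : f x0 = 0 := by rw [hrep x0, hp0, hq0]; ring
    have h2 : f m = 0 := by rw [hrep m, hp0, hq0]; ring
    rw [h1, h2] at hfx0; exact lt_irrefl 0 hfx0
  have hQP : p * Q.1 + q * Q.2 = p * P.1 + q * P.2 := by
    have hEq : f Q = f P := by rw [hfP, hfQ]
    rw [hrep Q, hrep P] at hEq; linarith
  refine ⟨(-p, -q), ?_, ?_, ?_⟩
  · intro h0
    rw [Prod.ext_iff] at h0
    simp only [Prod.fst_zero, Prod.snd_zero, neg_eq_zero] at h0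
    exact hpq h0
  · show (-p) * (Q - P).1 + (-q) * (Q - P).2 = 0
    simp only [Prod.fst_sub, Prod.snd_sub]
    linarith
  · rintro A ⟨j, hj1, hj2, rfl⟩
    have hjK : V j ∈ K := subset_convexHull ℝ _ ⟨j, rfl⟩
    have hle := hKle (V j) hjK
    have hne : f (V j) ≠ f m := by
      intro heq
      refine hs i (nxt i) j (Ne.symm (nxt_ne (by omega) i)) (Ne.symm hj1) (Ne.symm hj2) ?_
      refine collinear_of_level p q hpq P Q (V j) hQP ?_
      have hEq : f (V j) = f P := by rw [heq, hfP]
      rw [hrep (V j), hrep P] at hEq; linarith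
    have h' : f (V j) < f m := lt_of_le_of_ne hle hne
    show 0 < (-p) * (V j - P).1 + (-q) * (V j - P).2
    simp only [Prod.fst_sub, Prod.snd_sub]
    have hfPm : p * P.1 + q * P.2 = f m := by rw [← hrep P]; exact hfP
    have hfVj : p * (V j).1 + q * (V j).2 < f m := by rw [← hrep (V j)]; exact h'
    nlinarith


/-- Pinelis, Remark 2: for a strictly convex n-gon with n ≥ 4, the signs
`a_2,…,a_{n−2}, b_2,…,b_{n−1}, c_2,…,c_{n−1}` are all equal and nonzero. -/
theorem stmt_8 (n : ℕ) (hn : 4 ≤ n) (V : Fin n → ℝ × ℝ)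
    (h : StrictPoly V ∧ IsConvexPolygon V) :
    ∃ s : ℝ, s ≠ 0 ∧
      (∀ i : Fin n, 2 ≤ i.val → i.val ≤ n - 2 →
        Real.sign (det3 (V ⟨i.val - 1, lt_of_le_of_lt (Nat.sub_le _ _) i.isLt⟩)
          (V i) (V (nxt i))) = s) ∧
      (∀ i : Fin n, 2 ≤ i.val → i.val ≤ n - 1 →
        Real.sign (det3 (V ⟨0, by omega⟩)
          (V ⟨i.val - 1, lt_of_le_of_lt (Nat.sub_le _ _) i.isLt⟩) (V i)) = s ∧
        Real.sign (det3 (V ⟨0, by omega⟩) (V ⟨1, by omega⟩) (V i)) = s) := by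
  obtain ⟨hs, hc⟩ := h
  have hsts := strict_sides hn V hs hc
  have hVne : ∀ i : Fin n, V i ≠ V (nxt i) := by
    intro i hEq
    obtain ⟨c, hcn, hc1, hc2⟩ : ∃ c, c < n ∧ c ≠ i.val ∧ c ≠ (nxt i).val := by
      by_cases h0 : i.val ≠ 0 ∧ (nxt i).val ≠ 0
      · exact ⟨0, by omega, by omega, by omega⟩
      · by_cases h1 : i.val ≠ 1 ∧ (nxt i).val ≠ 1
        · exact ⟨1, by omega, by omega, by omega⟩
        · exact ⟨2, by omega, by omega, by omega⟩
    refine hs i (nxt i) ⟨c, hcn⟩ (Ne.symm (nxt_ne (by omega) i))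
      (Ne.symm (Fin.ne_of_val_ne hc1)) (Ne.symm (Fin.ne_of_val_ne hc2)) ?_
    rw [← hEq, Set.insert_idem]
    exact collinear_pair ℝ _ _
  choose ε hε0 hεv using fun i : Fin n => edge_sign (hVne i) (hsts i)
  have hnxtval : ∀ i : Fin n, (nxt i).val = if i.val + 1 = n then 0 else i.val + 1 := by
    intro i
    have hi := i.isLt
    show (i.val + 1) % n = _
    split
    · next h' => rw [h', Nat.mod_self]
    · next h' => exact Nat.mod_eq_of_lt (by omega)
  have hadj : ∀ i : Fin n, ε i = ε (nxt i) := by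
    intro i
    have hv1 := hnxtval i
    have hv2 := hnxtval (nxt i)
    have hi := i.isLt
    have hd12 : nxt i ≠ i := nxt_ne (by omega) i
    have hd23 : nxt (nxt i) ≠ nxt i := nxt_ne (by omega) (nxt i)
    have hd13 : nxt (nxt i) ≠ i := by
      apply Fin.ne_of_val_ne
      rw [hv2, hv1]
      split_ifs <;> omega
    have e1 := hεv i (V (nxt (nxt i))) ⟨nxt (nxt i), hd13, hd23, rfl⟩
    have e2 := hεv (nxt i) (V i) ⟨i, Ne.symm hd12, Ne.symm hd13, rfl⟩
    rw [det3_cyc] at e1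
    exact e1.symm.trans e2
  have hconst : ∀ i : Fin n, ε i = ε ⟨0, by omega⟩ := by
    have key : ∀ k (hk : k < n), ε ⟨k, hk⟩ = ε ⟨0, by omega⟩ := by
      intro k
      induction k with
      | zero => intro hk; rfl
      | succ m ih =>
        intro hk
        have hm : m < n := by omega
        have hnm : nxt ⟨m, hm⟩ = ⟨m + 1, hk⟩ := by
          apply Fin.ext
          show (m + 1) % n = m + 1
          exact Nat.mod_eq_of_lt hk
        rw [← hnm, ← hadj ⟨m, hm⟩, ih hm]
    intro i
    exact key i.val i.isLt
  refine ⟨ε ⟨0, by omega⟩, hε0 _, ?_, ?_⟩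
  · intro i h2 hle
    have hi := i.isLt
    have hnxte : nxt ⟨i.val - 1, lt_of_le_of_lt (Nat.sub_le _ _) i.isLt⟩ = i := by
      apply Fin.ext
      show (i.val - 1 + 1) % n = i.val
      rw [show i.val - 1 + 1 = i.val by omega]
      exact Nat.mod_eq_of_lt hi
    have hnival : (nxt i).val = i.val + 1 := by
      show (i.val + 1) % n = i.val + 1
      exact Nat.mod_eq_of_lt (by omega)
    have h1 : nxt i ≠ ⟨i.val - 1, lt_of_le_of_lt (Nat.sub_le _ _) i.isLt⟩ := by
      apply Fin.ne_of_val_ne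
      rw [hnival]
      show i.val + 1 ≠ i.val - 1
      omega
    have h2' : nxt i ≠ nxt ⟨i.val - 1, lt_of_le_of_lt (Nat.sub_le _ _) i.isLt⟩ := by
      rw [hnxte]
      apply Fin.ne_of_val_ne
      rw [hnival]
      omega
    have hsign := hεv ⟨i.val - 1, lt_of_le_of_lt (Nat.sub_le _ _) i.isLt⟩
      (V (nxt i)) ⟨nxt i, h1, h2', rfl⟩
    rw [hnxte] at hsign
    exact hsign.trans (hconst _)
  · intro i h2 hle
    have hi := i.isLt
    constructor
    · have hnxte : nxt ⟨i.val - 1, lt_of_le_of_lt (Nat.sub_le _ _) i.isLt⟩ = i := by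
        apply Fin.ext
        show (i.val - 1 + 1) % n = i.val
        rw [show i.val - 1 + 1 = i.val by omega]
        exact Nat.mod_eq_of_lt hi
      have h1 : (⟨0, by omega⟩ : Fin n) ≠ ⟨i.val - 1, lt_of_le_of_lt (Nat.sub_le _ _) i.isLt⟩ := by
        apply Fin.ne_of_val_ne
        show 0 ≠ i.val - 1
        omega
      have h2' : (⟨0, by omega⟩ : Fin n) ≠
          nxt ⟨i.val - 1, lt_of_le_of_lt (Nat.sub_le _ _) i.isLt⟩ := by
        rw [hnxte]
        apply Fin.ne_of_val_ne
        show 0 ≠ i.val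
        omega
      have hsign := hεv ⟨i.val - 1, lt_of_le_of_lt (Nat.sub_le _ _) i.isLt⟩
        (V ⟨0, by omega⟩) ⟨⟨0, by omega⟩, h1, h2', rfl⟩
      rw [hnxte] at hsign
      rw [det3_cyc]
      exact hsign.trans (hconst _)
    · have hnxt0 : nxt (⟨0, by omega⟩ : Fin n) = ⟨1, by omega⟩ := by
        apply Fin.ext
        show (0 + 1) % n = 1
        exact Nat.mod_eq_of_lt (by omega)
      have h1 : i ≠ (⟨0, by omega⟩ : Fin n) := Fin.ne_of_val_ne (show i.val ≠ 0 by omega)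
      have h2' : i ≠ nxt (⟨0, by omega⟩ : Fin n) := by
        rw [hnxt0]
        exact Fin.ne_of_val_ne (show i.val ≠ 1 by omega)
      have hsign := hεv ⟨0, by omega⟩ (V i) ⟨i, h1, h2', rfl⟩
      rw [hnxt0] at hsign
      exact hsign.trans (hconst _)
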